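/- Under the rotated designation scheme with global offset, for every agent x ∈ {1, …, n}, the total number of coalition value calculations assigned to agent x across all coalition sizes satisfies ⌊(2^n − 1)/n⌋ ≤ |CV_x| ≤ ⌈(2^n − 1)/n⌉, where |CV_x| = A + |{ j : (x − 1 − H_j) mod n < d^{(j)} }| with A = Σ_{s=1}^{n} |A(n,s)|. In particular, the maximum difference in total allocation between any two agents, across all coalition sizes, is at most 1. -/

import Mathlib

namespace NDCA

/-- `t` is an increment array (IA) of size `s` for `n` agents:
a tuple of non-negative integers of length `s` with sum `n - s`. -/
def IsIA (n s : ℕ) (t : List ℕ) : Prop :=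
  t.length = s ∧ t.sum = n - s

/-- Cumulative increment `φ_i` (1-indexed): `φ_1 = 0`, and
`φ_i = Σ_{k=0}^{i-2} (t_k + 1)` for `2 ≤ i`. -/
def phi (t : List ℕ) (i : ℕ) : ℕ := (t.take (i - 1)).sum + (i - 1)

/-- The coalition generated by increment array `t` from starting agent `x`:
`C(x,t) = { ((x - 1 + φ_i) mod n) + 1 : 1 ≤ i ≤ s }`. -/
def coal (n x : ℕ) (t : List ℕ) : Finset ℕ :=
  (Finset.Icc 1 t.length).image (fun i => (x - 1 + phi t i) % n + 1)

/-- The collection of coalitions generated by `t` as the starting agent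
ranges over `{1, …, n}`. -/
def gen (n : ℕ) (t : List ℕ) : Finset (Finset ℕ) :=
  (Finset.Icc 1 n).image (fun x => coal n x t)

/-- `u` is a circular shift of `t`: `u = ⟨t_k, …, t_{s-1}, t_0, …, t_{k-1}⟩`
for some `0 ≤ k ≤ s - 1`. -/
def ShiftEquiv (t u : List ℕ) : Prop :=
  ∃ k, k < t.length ∧ u = t.rotate k

/-- `p` is a period of `t`: `1 ≤ p`, `p ∣ |t|`, and `t` consists of
`|t|/p` identical copies of its first `p` entries. -/
def IsPeriodOf (t : List ℕ) (p : ℕ) : Prop :=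
  1 ≤ p ∧ p ∣ t.length ∧ t = (List.replicate (t.length / p) (t.take p)).flatten

/-- The period `π(t)`: the smallest `p` that is a period of `t`. -/
noncomputable def period (t : List ℕ) : ℕ := sInf {p | IsPeriodOf t p}

/-- The stride `ϖ(t) = n·π(t)/|t|` of an increment array (its size being its
length). -/
noncomputable def strideG (n : ℕ) (t : List ℕ) : ℕ := n * period t / t.length

/-- Global cumulative offset `H_j = Σ_{i<j} d^{(i)}` over the periodic
canonical IAs of all sizes, enumerated (0-indexed) by the list `L`. -/
noncomputable def offsetG (n : ℕ) (L : List (List ℕ)) (j : ℕ) : ℕ :=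
  ∑ i ∈ Finset.range j, strideG n (L.getD i [])

/-- The number of periodic canonical IAs (across all sizes, enumerated by
`L`) for which agent `x` passes the designation test
`(x - 1 - H_j) mod n < d^{(j)}`. -/
noncomputable def desigCountG (n : ℕ) (L : List (List ℕ)) (x : ℕ) : ℕ :=
  ((Finset.range L.length).filter (fun j =>
    ((x : ℤ) - 1 - (offsetG n L j : ℤ)) % (n : ℤ)
      < (strideG n (L.getD j []) : ℤ))).card

section Lemmas

private lemma rot_iter (t : List ℕ) (k : ℕ) :
    (fun l : List ℕ => l.rotate 1)^[k] t = t.rotate k := by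
  induction k with
  | zero => simp
  | succ k ih => rw [Function.iterate_succ_apply', ih, List.rotate_rotate]

private lemma len_flat_rep (l : List ℕ) (m : ℕ) :
    (List.replicate m l).flatten.length = m * l.length := by
  simp [List.length_flatten, List.map_replicate, List.sum_replicate, smul_eq_mul]

private lemma getElem_flat_rep (l : List ℕ) (hl : 0 < l.length) (m i : ℕ)
    (h : i < m * l.length) :
    (List.replicate m l).flatten[i]'(by rw [len_flat_rep]; exact h) =
      l[i % l.length]'(Nat.mod_lt _ hl) := by
  induction m generalizing i with
  | zero => omega
  | succ m ih =>
    simp only [List.replicate_succ, List.flatten_cons]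
    by_cases hi : i < l.length
    · rw [List.getElem_append_left hi]
      have : i % l.length = i := Nat.mod_eq_of_lt hi
      simp only [this]
    · push_neg at hi
      have h2 : i - l.length < m * l.length := by
        have : (m+1) * l.length = m * l.length + l.length := by ring
        omega
      rw [List.getElem_append_right hi]
      rw [ih (i - l.length) h2]
      have : (i - l.length) % l.length = i % l.length := by
        conv_rhs => rw [← Nat.sub_add_cancel hi, Nat.add_mod_right]
      simp only [this]

/-- flatten-replicate form is equivalent to a getElem periodicity property. -/
private lemma flat_rep_iff (t : List ℕ) (p : ℕ) (hp : 1 ≤ p) (hd : p ∣ t.length) :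
    t = (List.replicate (t.length / p) (t.take p)).flatten ↔
      ∀ i (h : i < t.length), t[i] =
        t[i % p]'(lt_of_le_of_lt (Nat.mod_le i p) h) := by
  rcases Nat.eq_zero_or_pos t.length with h0 | h0
  · constructor
    · intro _ i h; omega
    · intro _
      have ht : t = [] := List.eq_nil_of_length_eq_zero h0
      rw [ht]; simp [h0]
  · have hps : p ≤ t.length := Nat.le_of_dvd h0 hd
    have hlt : (t.take p).length = p := by
      simp [List.length_take, Nat.min_eq_left hps]
    have hlen : ((List.replicate (t.length / p) (t.take p)).flatten).length = t.length := by
      rw [len_flat_rep, hlt, Nat.div_mul_cancel hd]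
    constructor
    · intro ht i h
      have h' : i < t.length / p * (t.take p).length := by
        rw [hlt, Nat.div_mul_cancel hd]; exact h
      rw [List.getElem_of_eq ht h]
      rw [getElem_flat_rep _ (by omega) _ _ h']
      have : i % (t.take p).length = i % p := by rw [hlt]
      simp only [this, List.getElem_take]
    · intro hQ
      apply List.ext_getElem hlen.symm
      intro i h1 h2
      have h' : i < t.length / p * (t.take p).length := by
        rw [hlt, Nat.div_mul_cancel hd]; exact h1
      rw [getElem_flat_rep _ (by omega) _ _ h']
      have : i % (t.take p).length = i % p := by rw [hlt]
      simp only [this, List.getElem_take]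
      exact hQ i h1

private lemma rotate_iff_getElem (t : List ℕ) (p : ℕ) :
    t.rotate p = t ↔ ∀ i (h : i < t.length),
      t[(i + p) % t.length]'(Nat.mod_lt _ (by omega)) = t[i] := by
  constructor
  · intro hr i h
    rw [List.getElem_of_eq hr.symm h]
    rw [List.getElem_rotate]
  · intro hQ
    apply List.ext_getElem (by simp)
    intro i h1 h2
    rw [List.getElem_rotate]
    exact hQ i h2

private lemma Q_iff_rotate (t : List ℕ) (p : ℕ) (hp : 1 ≤ p) (hd : p ∣ t.length) :
    (∀ i (h : i < t.length), t[i] = t[i % p]'(lt_of_le_of_lt (Nat.mod_le i p) h))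
      ↔ t.rotate p = t := by
  constructor
  · intro hQ
    rw [rotate_iff_getElem]
    intro i h
    have hl : 0 < t.length := by omega
    have h2 : (i + p) % t.length < t.length := Nat.mod_lt _ hl
    rw [hQ _ h2, hQ i h]
    have : (i + p) % t.length % p = i % p := by
      rw [Nat.mod_mod_of_dvd _ hd, Nat.add_mod_right]
    simp only [this]
  · intro hr
    rw [rotate_iff_getElem] at hr
    intro i
    induction i using Nat.strong_induction_on with
    | _ i ih =>
      intro h
      by_cases hip : i < p
      · have : i % p = i := Nat.mod_eq_of_lt hip
        simp only [this]
      · push_neg at hip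
        have h3 : i - p < t.length := by omega
        have h4 := hr (i - p) h3
        have h5 : (i - p + p) % t.length = i := by
          rw [Nat.sub_add_cancel hip, Nat.mod_eq_of_lt h]
        simp only [h5] at h4
        rw [h4, ih (i - p) (by omega) h3]
        have : (i - p) % p = i % p := by
          conv_rhs => rw [← Nat.sub_add_cancel hip, Nat.add_mod_right]
        simp only [this]

lemma isPeriodOf_iff_rotate (t : List ℕ) (p : ℕ) :
    IsPeriodOf t p ↔ 1 ≤ p ∧ p ∣ t.length ∧ t.rotate p = t := by
  constructor
  · rintro ⟨h1, h2, h3⟩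
    exact ⟨h1, h2, (Q_iff_rotate t p h1 h2).1 ((flat_rep_iff t p h1 h2).1 h3)⟩
  · rintro ⟨h1, h2, h3⟩
    exact ⟨h1, h2, (flat_rep_iff t p h1 h2).2 ((Q_iff_rotate t p h1 h2).2 h3)⟩

lemma isPeriodOf_length (t : List ℕ) (ht : t ≠ []) : IsPeriodOf t t.length := by
  rw [isPeriodOf_iff_rotate]
  exact ⟨List.length_pos_iff.2 ht, dvd_rfl, List.rotate_length t⟩

private lemma isPeriodicPt_iff (t : List ℕ) (k : ℕ) :
    Function.IsPeriodicPt (fun l : List ℕ => l.rotate 1) k t ↔ t.rotate k = t := by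
  unfold Function.IsPeriodicPt Function.IsFixedPt
  rw [rot_iter]

lemma period_eq_minimalPeriod (t : List ℕ) (ht : t ≠ []) :
    period t = Function.minimalPeriod (fun l : List ℕ => l.rotate 1) t := by
  have hl : 0 < t.length := List.length_pos_iff.2 ht
  set σ := fun l : List ℕ => l.rotate 1 with hσ
  have hper : Function.IsPeriodicPt σ t.length t := by
    rw [isPeriodicPt_iff]; exact List.rotate_length t
  set m := Function.minimalPeriod σ t with hm
  have hmem : t ∈ Function.periodicPts σ := ⟨t.length, hl, hper⟩
  have hm1 : 0 < m := Function.minimalPeriod_pos_of_mem_periodicPts hmem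
  have hmd : m ∣ t.length := hper.minimalPeriod_dvd
  have hmrot : t.rotate m = t := by
    rw [← isPeriodicPt_iff]; exact Function.isPeriodicPt_minimalPeriod σ t
  have hmP : IsPeriodOf t m := (isPeriodOf_iff_rotate t m).2 ⟨hm1, hmd, hmrot⟩
  have hne : {p | IsPeriodOf t p}.Nonempty :=
    ⟨t.length, Set.mem_setOf_eq ▸ isPeriodOf_length t ht⟩
  have h1 : period t ≤ m := Nat.sInf_le (Set.mem_setOf_eq ▸ hmP)
  have hP : IsPeriodOf t (period t) := Nat.sInf_mem hne
  have h2 : m ≤ period t := by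
    rcases (isPeriodOf_iff_rotate t _).1 hP with ⟨hp1, hp2, hp3⟩
    have : m ∣ period t := Function.IsPeriodicPt.minimalPeriod_dvd
      ((isPeriodicPt_iff t _).2 hp3)
    exact Nat.le_of_dvd hp1 this
  omega

lemma period_isPeriodOf (t : List ℕ) (ht : t ≠ []) : IsPeriodOf t (period t) :=
  Nat.sInf_mem (⟨t.length, Set.mem_setOf_eq ▸ isPeriodOf_length t ht⟩ :
    {p | IsPeriodOf t p}.Nonempty)

lemma one_le_period (t : List ℕ) (ht : t ≠ []) : 1 ≤ period t :=
  (period_isPeriodOf t ht).1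

lemma period_dvd_length (t : List ℕ) (ht : t ≠ []) : period t ∣ t.length :=
  (period_isPeriodOf t ht).2.1

lemma period_le_length (t : List ℕ) (ht : t ≠ []) : period t ≤ t.length :=
  Nat.le_of_dvd (List.length_pos_iff.2 ht) (period_dvd_length t ht)

lemma rotate_eq_iff_period_dvd (t : List ℕ) (ht : t ≠ []) (k : ℕ) :
    t.rotate k = t ↔ period t ∣ k := by
  rw [← isPeriodicPt_iff, Function.isPeriodicPt_iff_minimalPeriod_dvd,
    ← period_eq_minimalPeriod t ht]


section PhiCoal

lemma phi_one (t : List ℕ) : phi t 1 = 0 := by simp [phi]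

lemma phi_succ (t : List ℕ) (i : ℕ) : phi t (i+1) = (t.take i).sum + i := by simp [phi]

lemma sum_take_mono (t : List ℕ) {i j : ℕ} (h : i ≤ j) :
    (t.take i).sum ≤ (t.take j).sum := by
  rw [show j = i + (j - i) by omega, List.take_add, List.sum_append]
  exact Nat.le_add_right _ _

lemma phi_mono (t : List ℕ) {i j : ℕ} (h : i ≤ j) : phi t i ≤ phi t j := by
  unfold phi
  have := sum_take_mono t (show i - 1 ≤ j - 1 by omega)
  omega

lemma phi_strict (t : List ℕ) {i j : ℕ} (h1 : 1 ≤ i) (h : i < j) :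
    phi t i < phi t j := by
  have h2 : phi t (i+1) ≤ phi t j := phi_mono t (by omega)
  have h3 : phi t (i+1) = (t.take i).sum + i := phi_succ t i
  have h4 : phi t i = (t.take (i-1)).sum + (i-1) := rfl
  have h5 := sum_take_mono t (show i - 1 ≤ i by omega)
  omega

lemma sum_take_le (t : List ℕ) (i : ℕ) : (t.take i).sum ≤ t.sum := by
  conv_rhs => rw [← List.sum_take_add_sum_drop t i]
  exact Nat.le_add_right _ _

lemma phi_lt_n {n s : ℕ} {t : List ℕ} (hIA : IsIA n s t) (hs : 1 ≤ s) (hsn : s ≤ n)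
    {i : ℕ} (hi1 : 1 ≤ i) (hi : i ≤ s) : phi t i < n := by
  have h1 : phi t i = (t.take (i-1)).sum + (i-1) := rfl
  have h2 := sum_take_le t (i-1)
  have h3 := hIA.2
  omega

lemma phi_le_n {n s : ℕ} {t : List ℕ} (hIA : IsIA n s t) (hsn : s ≤ n)
    {i : ℕ} (hi : i ≤ s + 1) : phi t i ≤ n := by
  have h1 : phi t i = (t.take (i-1)).sum + (i-1) := rfl
  have h2 := sum_take_le t (i-1)
  have h3 := hIA.2
  omega

lemma phi_top {n s : ℕ} {t : List ℕ} (hIA : IsIA n s t) (hsn : s ≤ n) :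
    phi t (s+1) = n := by
  have h : t.take s = t := by rw [← hIA.1]; exact List.take_length
  rw [phi_succ, h, hIA.2]
  omega

lemma phi_rotate_low {t : List ℕ} {s k i : ℕ} (hlen : t.length = s) (hk : k ≤ s)
    (hi : 1 ≤ i) (hki : k + i ≤ s + 1) :
    phi (t.rotate k) i + phi t (k + 1) = phi t (k + i) := by
  have hrot : t.rotate k = t.drop k ++ t.take k :=
    List.rotate_eq_drop_append_take (by omega)
  have h1 : (t.rotate k).take (i-1) = (t.drop k).take (i-1) := by
    rw [hrot]
    exact List.take_append_of_le_length (by simp [hlen]; omega)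
  have h2 : (t.take (k + (i-1))).sum = (t.take k).sum + ((t.drop k).take (i-1)).sum := by
    rw [List.take_add, List.sum_append]
  unfold phi
  rw [h1]
  have e1 : k + 1 - 1 = k := by omega
  have e2 : k + i - 1 = k + (i - 1) := by omega
  rw [e1, e2, h2]
  omega

lemma phi_rotate_high {n s : ℕ} {t : List ℕ} (hIA : IsIA n s t) (hsn : s ≤ n)
    {k i : ℕ} (hk : k ≤ s) (hi1 : 1 ≤ i) (hi : i ≤ s) (hki : s + 1 ≤ k + i) :
    phi (t.rotate k) i + phi t (k + 1) = n + phi t (k + i - s) := by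
  obtain ⟨hlen, hsum⟩ := hIA
  have hrot : t.rotate k = t.drop k ++ t.take k :=
    List.rotate_eq_drop_append_take (by omega)
  have hdl : (t.drop k).length = s - k := by simp [hlen]
  have h1 : (t.rotate k).take (i-1) = t.drop k ++ (t.take k).take (i - 1 - (s - k)) := by
    rw [hrot, List.take_append, hdl,
      List.take_of_length_le (le_of_eq_of_le hdl (by omega))]
  have h2 : (t.take k).take (i - 1 - (s - k)) = t.take (i - 1 - (s - k)) := by
    rw [List.take_take, Nat.min_eq_left (by omega)]
  have h3 : (t.take k).sum + (t.drop k).sum = t.sum := List.sum_take_add_sum_drop t k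
  unfold phi
  rw [h1, List.sum_append, h2]
  have e1 : k + 1 - 1 = k := by omega
  have e2 : k + i - s - 1 = i - 1 - (s - k) := by omega
  rw [e1, e2]
  omega

lemma mem_coal {n x : ℕ} {t : List ℕ} {a : ℕ} :
    a ∈ coal n x t ↔ ∃ i, 1 ≤ i ∧ i ≤ t.length ∧ (x - 1 + phi t i) % n + 1 = a := by
  simp [coal, Finset.mem_image, Finset.mem_Icc]
  constructor
  · rintro ⟨i, ⟨h1, h2⟩, h3⟩; exact ⟨i, h1, h2, h3⟩
  · rintro ⟨i, h1, h2, h3⟩; exact ⟨i, ⟨h1, h2⟩, h3⟩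

lemma self_mem_coal {n x : ℕ} {t : List ℕ} (hx1 : 1 ≤ x) (hxn : x ≤ n)
    (ht : 1 ≤ t.length) : x ∈ coal n x t := by
  rw [mem_coal]
  refine ⟨1, le_refl 1, ht, ?_⟩
  rw [phi_one, Nat.add_zero, Nat.mod_eq_of_lt (by omega)]
  omega

lemma coal_subset_Icc {n x : ℕ} (hn : 1 ≤ n) (t : List ℕ) :
    coal n x t ⊆ Finset.Icc 1 n := by
  intro a ha
  rw [mem_coal] at ha
  obtain ⟨i, _, _, h⟩ := ha
  have := Nat.mod_lt (x - 1 + phi t i) (show 0 < n by omega)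
  rw [Finset.mem_Icc]
  omega

lemma coal_card {n s x : ℕ} {t : List ℕ} (hIA : IsIA n s t) (hs : 1 ≤ s) (hsn : s ≤ n) :
    (coal n x t).card = s := by
  unfold coal
  rw [hIA.1, Finset.card_image_of_injOn, Nat.card_Icc]
  · omega
  · intro i hi j hj hij
    simp only [Finset.coe_Icc, Set.mem_Icc] at hi hj
    simp only at hij
    have h1 : phi t i < n := phi_lt_n hIA hs hsn hi.1 hi.2
    have h2 : phi t j < n := phi_lt_n hIA hs hsn hj.1 hj.2
    have h3 : (x - 1 + phi t i) % n = (x - 1 + phi t j) % n := by omega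
    have h4 : phi t i % n = phi t j % n :=
      Nat.ModEq.add_left_cancel' (x-1) h3
    have h5 : phi t i = phi t j := by
      rwa [Nat.mod_eq_of_lt h1, Nat.mod_eq_of_lt h2] at h4
    by_contra hne
    rcases Nat.lt_or_ge i j with h | h
    · have := phi_strict t hi.1 h; omega
    · have hlt : j < i := by omega
      have := phi_strict t hj.1 hlt; omega

end PhiCoal

lemma isIA_rotate {n s k : ℕ} {t : List ℕ} (hIA : IsIA n s t) : IsIA n s (t.rotate k) :=
  ⟨by simp [hIA.1], by rw [(List.rotate_perm t k).sum_eq, hIA.2]⟩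

lemma coal_rotate {n s : ℕ} (hn : 1 ≤ n) (hs : 1 ≤ s) (hsn : s ≤ n) {t : List ℕ}
    (hIA : IsIA n s t) {k : ℕ} (hk : k < s) (x : ℕ) :
    coal n x (t.rotate k) = coal n ((x - 1 + (n - phi t (k+1))) % n + 1) t := by
  have hlen := hIA.1
  have hrotlen : (t.rotate k).length = s := by simp [hlen]
  have hphik : phi t (k+1) ≤ n := phi_le_n hIA hsn (by omega)
  set x' := (x - 1 + (n - phi t (k+1))) % n + 1 with hx'
  have hx'1 : x' - 1 = (x - 1 + (n - phi t (k+1))) % n := by omega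
  ext a
  rw [mem_coal, mem_coal, hrotlen, hlen]
  constructor
  · rintro ⟨i, hi1, his, ha⟩
    by_cases hcase : k + i ≤ s
    · refine ⟨k + i, by omega, hcase, ?_⟩
      have hid := phi_rotate_low (k := k) hlen (by omega) hi1 (by omega)
      rw [← ha, hx'1]
      have key : ((x - 1 + (n - phi t (k+1))) % n + phi t (k+i)) % n
           = (x - 1 + phi (t.rotate k) i) % n := by
        conv_lhs => rw [Nat.mod_add_mod]
        have he : x - 1 + (n - phi t (k+1)) + phi t (k+i)
            = (x - 1 + phi (t.rotate k) i) + n := by omega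
        rw [he, Nat.add_mod_right]
      omega
    · refine ⟨k + i - s, by omega, by omega, ?_⟩
      have hid := phi_rotate_high hIA hsn (le_of_lt hk) hi1 his (by omega)
      rw [← ha, hx'1]
      have key : ((x - 1 + (n - phi t (k+1))) % n + phi t (k+i-s)) % n
           = (x - 1 + phi (t.rotate k) i) % n := by
        conv_lhs => rw [Nat.mod_add_mod]
        have he : x - 1 + (n - phi t (k+1)) + phi t (k+i-s)
            = x - 1 + phi (t.rotate k) i := by omega
        rw [he]
      omega
  · rintro ⟨j, hj1, hjs, ha⟩
    by_cases hcase : k < j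
    · refine ⟨j - k, by omega, by omega, ?_⟩
      have hid := phi_rotate_low hlen (le_of_lt hk)
        (show 1 ≤ j - k by omega) (show k + (j-k) ≤ s + 1 by omega)
      rw [show k + (j - k) = j by omega] at hid
      rw [← ha, hx'1]
      have key : ((x - 1 + (n - phi t (k+1))) % n + phi t j) % n
           = (x - 1 + phi (t.rotate k) (j - k)) % n := by
        conv_lhs => rw [Nat.mod_add_mod]
        have he : x - 1 + (n - phi t (k+1)) + phi t j
            = (x - 1 + phi (t.rotate k) (j-k)) + n := by omega
        rw [he, Nat.add_mod_right]
      omega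
    · refine ⟨j + s - k, by omega, by omega, ?_⟩
      have hid := phi_rotate_high hIA hsn (le_of_lt hk)
        (show 1 ≤ j + s - k by omega) (show j + s - k ≤ s by omega) (by omega)
      rw [show k + (j + s - k) - s = j by omega] at hid
      rw [← ha, hx'1]
      have key : ((x - 1 + (n - phi t (k+1))) % n + phi t j) % n
           = (x - 1 + phi (t.rotate k) (j + s - k)) % n := by
        conv_lhs => rw [Nat.mod_add_mod]
        have he : x - 1 + (n - phi t (k+1)) + phi t j
            = x - 1 + phi (t.rotate k) (j + s - k) := by omega
        rw [he]
      omega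

lemma gen_rotate_subset {n s : ℕ} (hn : 1 ≤ n) (hs : 1 ≤ s) (hsn : s ≤ n) {t : List ℕ}
    (hIA : IsIA n s t) {k : ℕ} (hk : k < s) : gen n (t.rotate k) ⊆ gen n t := by
  intro C hC
  rw [gen, Finset.mem_image] at hC
  obtain ⟨x, hx, hCx⟩ := hC
  rw [gen, Finset.mem_image]
  refine ⟨(x - 1 + (n - phi t (k+1))) % n + 1, ?_, ?_⟩
  · rw [Finset.mem_Icc]
    have := Nat.mod_lt (x - 1 + (n - phi t (k+1))) (show 0 < n by omega)
    omega
  · rw [← coal_rotate hn hs hsn hIA hk x, hCx]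

lemma gen_rotate {n s : ℕ} (hn : 1 ≤ n) (hs : 1 ≤ s) (hsn : s ≤ n) {t : List ℕ}
    (hIA : IsIA n s t) {k : ℕ} (hk : k < s) : gen n (t.rotate k) = gen n t := by
  rcases Nat.eq_zero_or_pos k with h0 | h0
  · rw [h0, List.rotate_zero]
  · apply Finset.Subset.antisymm (gen_rotate_subset hn hs hsn hIA hk)
    have hback : (t.rotate k).rotate (s - k) = t := by
      rw [List.rotate_rotate, show k + (s - k) = s by omega, ← hIA.1,
        List.rotate_length]
    have hIA' : IsIA n s (t.rotate k) := isIA_rotate hIA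
    have := gen_rotate_subset hn hs hsn hIA' (show s - k < s by omega)
    rwa [hback] at this

lemma coal_determined {n s x : ℕ} (hn : 1 ≤ n) (hs : 1 ≤ s) (hsn : s ≤ n)
    {t u : List ℕ} (hIAt : IsIA n s t) (hIAu : IsIA n s u)
    (h : coal n x t = coal n x u) : t = u := by
  have hphi : ∀ (v w : List ℕ), IsIA n s v → IsIA n s w → coal n x v = coal n x w →
      ∀ i, 1 ≤ i → i ≤ s → ∃ j, 1 ≤ j ∧ j ≤ s ∧ phi v i = phi w j := by
    intro v w hv hw hvw i h1 h2
    have hmem : (x - 1 + phi v i) % n + 1 ∈ coal n x v := by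
      rw [mem_coal]; exact ⟨i, h1, le_of_le_of_eq h2 hv.1.symm, rfl⟩
    rw [hvw, mem_coal] at hmem
    obtain ⟨j, hj1, hj2, hj3⟩ := hmem
    rw [hw.1] at hj2
    refine ⟨j, hj1, hj2, ?_⟩
    have h3 : (x - 1 + phi v i) % n = (x - 1 + phi w j) % n := by omega
    have h4 : phi v i % n = phi w j % n := Nat.ModEq.add_left_cancel' (x-1) h3
    have h5 : phi v i < n := phi_lt_n hv hs hsn h1 h2
    have h6 : phi w j < n := phi_lt_n hw hs hsn hj1 hj2
    rw [Nat.mod_eq_of_lt h6, Nat.mod_eq_of_lt h5] at h4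
    omega
  have hsort : ∀ (v : List ℕ),
      ((List.range s).map (fun i => phi v (i+1))).Pairwise (· < ·) := by
    intro v
    rw [List.pairwise_iff_getElem]
    intro i j hi hj hij
    simp only [List.length_map, List.length_range] at hi hj
    simp only [List.getElem_map, List.getElem_range]
    exact phi_strict v (by omega) (by omega)
  have htf : ((List.range s).map (fun i => phi t (i+1))).toFinset =
      ((List.range s).map (fun i => phi u (i+1))).toFinset := by
    ext a
    simp only [List.mem_toFinset, List.mem_map, List.mem_range]
    constructor
    · rintro ⟨i, hi, rfl⟩
      obtain ⟨j, hj1, hj2, hj3⟩ := hphi t u hIAt hIAu h (i+1) (by omega) (by omega)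
      exact ⟨j - 1, by omega, by rw [show j - 1 + 1 = j by omega]; exact hj3.symm⟩
    · rintro ⟨i, hi, rfl⟩
      obtain ⟨j, hj1, hj2, hj3⟩ := hphi u t hIAu hIAt h.symm (i+1) (by omega) (by omega)
      exact ⟨j - 1, by omega, by rw [show j - 1 + 1 = j by omega]; exact hj3.symm⟩
  haveI : IsAntisymm ℕ (· < ·) := ⟨fun a b h1 h2 => (lt_asymm h1 h2).elim⟩
  have hperm := List.perm_of_nodup_nodup_toFinset_eq
    (hsort t).nodup (hsort u).nodup htf
  have hlist := List.Perm.eq_of_pairwise' (hsort t) (hsort u) hperm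
  have heq : ∀ i, i < s → phi t (i+1) = phi u (i+1) := by
    intro i hi
    have h1 : i < ((List.range s).map (fun i => phi t (i+1))).length := by
      simp [hi]
    have := List.getElem_of_eq hlist h1
    simpa using this
  have hps : ∀ i, i ≤ s → (t.take i).sum = (u.take i).sum := by
    intro i hi
    rcases Nat.lt_or_ge i s with hlt | hge
    · have := heq i hlt
      rw [phi_succ, phi_succ] at this
      omega
    · have hi' : i = s := by omega
      rw [hi']
      have h1 : t.take s = t := by rw [← hIAt.1]; exact List.take_length
      have h2 : u.take s = u := by rw [← hIAu.1]; exact List.take_length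
      rw [h1, h2, hIAt.2, hIAu.2]
  apply List.ext_getElem (by rw [hIAt.1, hIAu.1])
  intro i h1 h2
  have hts := List.sum_take_succ t i h1
  have hus := List.sum_take_succ u i h2
  have hl : i < s := hIAt.1 ▸ h1
  have e1 := hps i (by omega)
  have e2 := hps (i+1) (by omega)
  omega

lemma coal_shift_back {n s : ℕ} (hn : 1 ≤ n) (hs : 1 ≤ s) (hsn : s ≤ n) {t : List ℕ}
    (hIA : IsIA n s t) {x i : ℕ} (hx1 : 1 ≤ x) (hxn : x ≤ n) (hi1 : 1 ≤ i) (his : i ≤ s) :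
    coal n ((x - 1 + phi t i) % n + 1) (t.rotate (i-1)) = coal n x t := by
  rw [coal_rotate hn hs hsn hIA (show i - 1 < s by omega)]
  congr 1
  have he : i - 1 + 1 = i := by omega
  rw [he]
  have h1 : phi t i ≤ n := phi_le_n hIA hsn (by omega)
  have h2 : ((x - 1 + phi t i) % n + 1 - 1) = (x - 1 + phi t i) % n := by omega
  rw [h2, Nat.mod_add_mod]
  have h3 : x - 1 + phi t i + (n - phi t i) = (x - 1) + n := by omega
  rw [h3, Nat.add_mod_right, Nat.mod_eq_of_lt (by omega : x - 1 < n)]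
  omega

lemma coal_eq_rotate {n s : ℕ} (hn : 1 ≤ n) (hs : 1 ≤ s) (hsn : s ≤ n)
    {t u : List ℕ} (hIAt : IsIA n s t) (hIAu : IsIA n s u)
    {x y : ℕ} (hx : x ∈ Finset.Icc 1 n) (hy : y ∈ Finset.Icc 1 n)
    (h : coal n x t = coal n y u) : ∃ k, k < s ∧ u = t.rotate k := by
  rw [Finset.mem_Icc] at hx hy
  have hymem : y ∈ coal n x t := by
    rw [h]; exact self_mem_coal hy.1 hy.2 (by rw [hIAu.1]; omega)
  rw [mem_coal, hIAt.1] at hymem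
  obtain ⟨i, hi1, his, hyi⟩ := hymem
  refine ⟨i - 1, by omega, ?_⟩
  have hback := coal_shift_back hn hs hsn hIAt hx.1 hx.2 hi1 his
  rw [hyi] at hback
  have hyu : coal n y (t.rotate (i-1)) = coal n y u := by rw [hback, h]
  exact (coal_determined hn hs hsn (isIA_rotate hIAt) hIAu hyu).symm

lemma ia_ne_nil {n s : ℕ} {t : List ℕ} (hIA : IsIA n s t) (hs : 1 ≤ s) : t ≠ [] := by
  intro h
  have := hIA.1
  rw [h] at this
  simp at this
  omega

lemma period_facts {n s : ℕ} {t : List ℕ} (hIA : IsIA n s t) (hs : 1 ≤ s) (hsn : s ≤ n) :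
    strideG n t = (t.take (period t)).sum + period t
    ∧ (s / period t) * strideG n t = n
    ∧ (∀ m, m ≤ s / period t → phi t (m * period t + 1) = m * strideG n t)
    ∧ 1 ≤ period t ∧ period t ∣ s ∧ period t ≤ s := by
  have ht : t ≠ [] := ia_ne_nil hIA hs
  set π := period t with hπ
  set l := t.take π with hldef
  have hπ1 : 1 ≤ π := one_le_period t ht
  have hπd : π ∣ s := hIA.1 ▸ period_dvd_length t ht
  have hπs : π ≤ s := Nat.le_of_dvd (by omega) hπd
  set q := s / π with hq
  have hqπ : q * π = s := Nat.div_mul_cancel hπd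
  have hq1 : 1 ≤ q := by
    rw [hq]; exact (Nat.one_le_div_iff (by omega)).2 hπs
  have hl : l.length = π := by
    rw [hldef, List.length_take, hIA.1, Nat.min_eq_left hπs]
  have hflat : t = (List.replicate q l).flatten := by
    have := (period_isPeriodOf t ht).2.2
    rwa [hIA.1] at this
  have hsum_t : t.sum = q * l.sum := by
    conv_lhs => rw [hflat]
    rw [List.sum_flatten, List.map_replicate, List.sum_replicate, smul_eq_mul]
  have hn_eq : q * l.sum + s = n := by
    have := hIA.2
    omega
  have key : n * π = (l.sum + π) * s := by
    calc n * π = (q * l.sum + s) * π := by rw [hn_eq]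
    _ = (q * l.sum + q * π) * π := by rw [hqπ]
    _ = (l.sum + π) * (q * π) := by ring
    _ = (l.sum + π) * s := by rw [hqπ]
  have hstride : strideG n t = l.sum + π := by
    rw [strideG, hIA.1, ← hπ, key, Nat.mul_div_cancel _ (show 0 < s by omega)]
  have hqmul : q * strideG n t = n := by
    rw [hstride]
    have h1 : q * (l.sum + π) = q * l.sum + q * π := by ring
    omega
  refine ⟨hstride, hqmul, ?_, hπ1, hπd, hπs⟩
  intro m hm
  have htake : t.take (m * π) = (List.replicate m l).flatten := by
    conv_lhs => rw [hflat]
    rw [show q = m + (q - m) by omega, List.replicate_add, List.flatten_append]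
    exact List.take_left' (by rw [len_flat_rep, hl])
  have hsum : (t.take (m * π)).sum = m * l.sum := by
    rw [htake, List.sum_flatten, List.map_replicate, List.sum_replicate, smul_eq_mul]
  rw [phi_succ, hsum, hstride]
  ring

lemma fiber_eq {n s : ℕ} (hn : 1 ≤ n) (hs : 1 ≤ s) (hsn : s ≤ n) {t : List ℕ}
    (hIA : IsIA n s t) {x : ℕ} (hx : x ∈ Finset.Icc 1 n) :
    (Finset.Icc 1 n).filter (fun y => coal n y t = coal n x t)
      = (Finset.range (s / period t)).image
          (fun m => (x - 1 + m * strideG n t) % n + 1) := by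
  obtain ⟨hstride, hqmul, hphimul, hπ1, hπd, hπs⟩ := period_facts hIA hs hsn
  have ht : t ≠ [] := ia_ne_nil hIA hs
  rw [Finset.mem_Icc] at hx
  set π := period t
  set q := s / π with hqdef
  set d := strideG n t with hd
  have hd1 : 1 ≤ d := by
    rw [hstride]; omega
  have hqπ : q * π = s := Nat.div_mul_cancel hπd
  have hq1 : 1 ≤ q := by
    rw [hqdef]; exact (Nat.one_le_div_iff (by omega)).2 hπs
  have hmd_lt : ∀ m, m < q → m * d < n := by
    intro m hm
    have h1 : (m + 1) * d ≤ q * d := Nat.mul_le_mul_right d (by omega)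
    have h2 : (m+1) * d = m * d + d := by ring
    omega
  ext y
  rw [Finset.mem_filter, Finset.mem_image, Finset.mem_Icc]
  constructor
  · rintro ⟨⟨hy1, hyn⟩, hcoal⟩
    have hymem : y ∈ coal n x t := by
      rw [← hcoal]
      exact self_mem_coal hy1 hyn (by rw [hIA.1]; omega)
    rw [mem_coal, hIA.1] at hymem
    obtain ⟨i, hi1, his, hyi⟩ := hymem
    have hback := coal_shift_back hn hs hsn hIA (show 1 ≤ x by omega) (show x ≤ n by omega) hi1 his
    rw [hyi] at hback
    have hrot : t.rotate (i-1) = t := by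
      apply coal_determined hn hs hsn (isIA_rotate hIA) hIA
      rw [hback, hcoal]
    have hdvd : π ∣ (i - 1) := (rotate_eq_iff_period_dvd t ht (i-1)).1 hrot
    obtain ⟨m, hm⟩ := hdvd
    have hmq : m < q := by
      by_contra hge
      push_neg at hge
      have h9 : q * π ≤ m * π := Nat.mul_le_mul_right π hge
      have h10 : π * m = m * π := Nat.mul_comm π m
      omega
    refine ⟨m, Finset.mem_range.2 hmq, ?_⟩
    have hφ : phi t (m * π + 1) = m * d := hphimul m (by omega)
    have hcm : π * m = m * π := Nat.mul_comm π m
    rw [show m * π + 1 = i by omega] at hφ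
    rw [← hyi, hφ]
  · rintro ⟨m, hm, hym⟩
    rw [Finset.mem_range] at hm
    have hmlt := hmd_lt m hm
    constructor
    · constructor
      · omega
      · have := Nat.mod_lt (x - 1 + m * d) (show 0 < n by omega)
        omega
    · have hφ : phi t (m * π + 1) = m * d := hphimul m (by omega)
      have hi1 : 1 ≤ m * π + 1 := by omega
      have his : m * π + 1 ≤ s := by
        have : (m + 1) * π ≤ q * π := Nat.mul_le_mul_right π (by omega)
        have h2 : (m+1) * π = m * π + π := by ring
        omega
      have hback := coal_shift_back hn hs hsn hIA (show 1 ≤ x by omega) (show x ≤ n by omega) hi1 his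
      rw [hφ] at hback
      have hrot : t.rotate (m * π + 1 - 1) = t := by
        rw [show m * π + 1 - 1 = m * π by omega]
        exact (rotate_eq_iff_period_dvd t ht _).2 (dvd_mul_left π m)
      rw [hrot, hym] at hback
      exact hback

lemma gen_card {n s : ℕ} (hn : 1 ≤ n) (hs : 1 ≤ s) (hsn : s ≤ n) {t : List ℕ}
    (hIA : IsIA n s t) : (gen n t).card = strideG n t := by
  obtain ⟨hstride, hqmul, hphimul, hπ1, hπd, hπs⟩ := period_facts hIA hs hsn
  have hd1 : 1 ≤ strideG n t := by rw [hstride]; omega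
  have hq1 : 1 ≤ s / period t := (Nat.one_le_div_iff (by omega)).2 hπs
  have hcards : (Finset.Icc 1 n).card = ∑ C ∈ gen n t,
      ((Finset.Icc 1 n).filter (fun y => coal n y t = C)).card := by
    apply Finset.card_eq_sum_card_fiberwise
    intro y hy
    rw [gen, Finset.mem_coe, Finset.mem_image]
    exact ⟨y, Finset.mem_coe.1 hy, rfl⟩
  have hfib : ∀ C ∈ gen n t,
      ((Finset.Icc 1 n).filter (fun y => coal n y t = C)).card = s / period t := by
    intro C hC
    rw [gen, Finset.mem_image] at hC
    obtain ⟨x, hx, hCx⟩ := hC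
    rw [← hCx, fiber_eq hn hs hsn hIA hx, Finset.card_image_of_injOn,
      Finset.card_range]
    intro m₁ h₁ m₂ h₂ heq
    simp only [Finset.coe_range, Set.mem_Iio] at h₁ h₂
    simp only at heq
    have hmd_lt : ∀ m, m < s / period t → m * strideG n t < n := by
      intro m hm
      have hh1 : (m + 1) * strideG n t ≤ s / period t * strideG n t :=
        Nat.mul_le_mul_right _ (by omega)
      have hh2 : (m+1) * strideG n t = m * strideG n t + strideG n t := by ring
      omega
    have l₁ := hmd_lt m₁ h₁
    have l₂ := hmd_lt m₂ h₂
    have h3 : (x - 1 + m₁ * strideG n t) % n = (x - 1 + m₂ * strideG n t) % n := by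
      omega
    have h4 : (m₁ * strideG n t) % n = (m₂ * strideG n t) % n :=
      Nat.ModEq.add_left_cancel' (x-1) h3
    rw [Nat.mod_eq_of_lt l₁, Nat.mod_eq_of_lt l₂] at h4
    exact Nat.eq_of_mul_eq_mul_right (by omega) h4
  rw [Finset.sum_congr rfl hfib, Finset.sum_const, smul_eq_mul, Nat.card_Icc] at hcards
  have hn' : n + 1 - 1 = n := by omega
  rw [hn'] at hcards
  apply Nat.eq_of_mul_eq_mul_right (show 0 < s / period t by omega)
  rw [← hcards, Nat.mul_comm (s / period t) (strideG n t)] at *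
  omega

lemma exists_ia_of_subset {n s : ℕ} (hn : 1 ≤ n) (hs : 1 ≤ s) (hsn : s ≤ n)
    {C : Finset ℕ} (hC : C ∈ Finset.powersetCard s (Finset.Icc 1 n)) :
    ∃ u x, IsIA n s u ∧ x ∈ Finset.Icc 1 n ∧ coal n x u = C := by
  rw [Finset.mem_powersetCard] at hC
  obtain ⟨hsub, hcard⟩ := hC
  set l := C.sort (· ≤ ·) with hldef
  have hlen : l.length = s := by rw [hldef, Finset.length_sort, hcard]
  have hsorted : l.Pairwise (· < ·) := (Finset.sortedLT_sort C).pairwise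
  have hmem : ∀ a ∈ l, 1 ≤ a ∧ a ≤ n := by
    intro a ha
    have h1 : a ∈ C := (Finset.mem_sort _).1 ha
    have h2 := hsub h1
    rw [Finset.mem_Icc] at h2; exact h2
  have hstrict : ∀ (i j : ℕ) (hi : i < l.length) (hj : j < l.length),
      i < j → l[i] < l[j] := List.pairwise_iff_getElem.1 hsorted
  have hD : ∀ i, i < s → 1 ≤ l.getD i 0 ∧ l.getD i 0 ≤ n := by
    intro i hi
    have hi' : i < l.length := by omega
    rw [List.getD_eq_getElem l 0 hi']
    exact hmem _ (l.getElem_mem hi')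
  have hDlt : ∀ i j, i < j → j < s → l.getD i 0 < l.getD j 0 := by
    intro i j hij hj
    have hi' : i < l.length := by omega
    have hj' : j < l.length := by omega
    rw [List.getD_eq_getElem l 0 hi', List.getD_eq_getElem l 0 hj']
    exact hstrict i j hi' hj' hij
  set step : ℕ → ℕ :=
    fun i => (if i + 1 < s then l.getD (i+1) 0 else n + l.getD 0 0) - l.getD i 0 - 1
    with hstep
  set u := (List.range s).map step with hudef
  have hulen : u.length = s := by rw [hudef]; simp
  have huget : ∀ i (hi : i < s), u[i]'(by omega) = step i := by
    intro i hi
    rw [List.getElem_of_eq hudef (by omega), List.getElem_map, List.getElem_range]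
  have claimA : ∀ i, i < s → (u.take i).sum + i + l.getD 0 0 = l.getD i 0 := by
    intro i
    induction i with
    | zero => simp
    | succ i ih =>
      intro hi
      have hi' : i < s := by omega
      have hihyp := ih hi'
      have h1 : (u.take (i+1)).sum = (u.take i).sum + u[i]'(by omega) :=
        List.sum_take_succ u i (by omega)
      have h2 : u[i]'(by omega) = step i := huget i hi'
      have h3 : step i = l.getD (i+1) 0 - l.getD i 0 - 1 := by
        rw [hstep]; simp only [if_pos hi]
      have h4 : l.getD i 0 < l.getD (i+1) 0 := hDlt i (i+1) (by omega) hi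
      omega
  have usum : u.sum = n - s := by
    have h0 : u.take s = u := by rw [← hulen]; exact List.take_length
    have h1 : (u.take (s-1+1)).sum = (u.take (s-1)).sum + u[s-1]'(by omega) :=
      List.sum_take_succ u (s-1) (by omega)
    rw [show s - 1 + 1 = s by omega, h0] at h1
    have h2 : u[s-1]'(by omega) = step (s-1) := huget (s-1) (by omega)
    have h3 : step (s-1) = n + l.getD 0 0 - l.getD (s-1) 0 - 1 := by
      rw [hstep]; simp only [if_neg (show ¬(s - 1 + 1 < s) by omega)]
    have h4 := claimA (s-1) (by omega)
    have h5 := hD (s-1) (by omega)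
    have h6 := hD 0 (by omega)
    omega
  have hIAu : IsIA n s u := ⟨hulen, usum⟩
  have hx := hD 0 (by omega)
  refine ⟨u, l.getD 0 0, hIAu, by rw [Finset.mem_Icc]; omega, ?_⟩
  have hphiu : ∀ i, 1 ≤ i → i ≤ s → phi u i + l.getD 0 0 = l.getD (i-1) 0 := by
    intro i h1 h2
    have : phi u i = (u.take (i-1)).sum + (i-1) := rfl
    have := claimA (i-1) (by omega)
    omega
  ext a
  rw [mem_coal, hulen]
  constructor
  · rintro ⟨i, hi1, his, ha⟩
    have h1 := hphiu i hi1 his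
    have h2 := hD (i-1) (by omega)
    have h3 : l.getD 0 0 - 1 + phi u i = l.getD (i-1) 0 - 1 := by omega
    rw [h3, Nat.mod_eq_of_lt (by omega)] at ha
    have ha' : a = l.getD (i-1) 0 := by omega
    rw [ha']
    have hi' : i - 1 < l.length := by omega
    rw [List.getD_eq_getElem l 0 hi']
    have : l[i-1] ∈ l := l.getElem_mem hi'
    exact (Finset.mem_sort _).1 this
  · intro haC
    have hal : a ∈ l := (Finset.mem_sort _).2 haC
    rw [List.mem_iff_getElem] at hal
    obtain ⟨j, hj, hja⟩ := hal
    refine ⟨j + 1, by omega, by omega, ?_⟩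
    have h1 := hphiu (j+1) (by omega) (by omega)
    rw [show j + 1 - 1 = j by omega] at h1
    have h2 := hD j (by omega)
    have h3 : l.getD 0 0 - 1 + phi u (j+1) = l.getD j 0 - 1 := by omega
    rw [h3, Nat.mod_eq_of_lt (by omega)]
    rw [List.getD_eq_getElem l 0 (by omega)]
    have h4 : 1 ≤ l[j] := (hmem _ (l.getElem_mem hj)).1
    omega

lemma sum_stride_eq_choose {n : ℕ} (hn : 1 ≤ n) (R : ℕ → Finset (List ℕ))
    (hIA : ∀ s ∈ Finset.Icc 1 n, ∀ t ∈ R s, IsIA n s t)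
    (hdistinct : ∀ s ∈ Finset.Icc 1 n, ∀ t ∈ R s, ∀ u ∈ R s, ShiftEquiv t u → t = u)
    (hcomplete : ∀ s ∈ Finset.Icc 1 n, ∀ u, IsIA n s u → ∃ t ∈ R s, ShiftEquiv t u) :
    ∀ s ∈ Finset.Icc 1 n, ∑ t ∈ R s, strideG n t = n.choose s := by
  intro s hsmem
  obtain ⟨hs, hsn⟩ := Finset.mem_Icc.1 hsmem
  have hpart : Finset.powersetCard s (Finset.Icc 1 n)
      = (R s).biUnion (fun t => gen n t) := by
    ext C
    constructor
    · intro hC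
      obtain ⟨u, x, hIAu, hx, hcoal⟩ := exists_ia_of_subset hn hs hsn hC
      obtain ⟨t, htR, k, hk, hu⟩ := hcomplete s hsmem u hIAu
      have hIAt := hIA s hsmem t htR
      have hgen : gen n u = gen n t := by
        rw [hu]
        exact gen_rotate hn hs hsn hIAt (by rw [← hIAt.1]; exact hk)
      rw [Finset.mem_biUnion]
      refine ⟨t, htR, ?_⟩
      rw [← hgen, gen, Finset.mem_image]
      exact ⟨x, hx, hcoal⟩
    · intro hC
      rw [Finset.mem_biUnion] at hC
      obtain ⟨t, htR, hCgen⟩ := hC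
      rw [gen, Finset.mem_image] at hCgen
      obtain ⟨x, hx, hCx⟩ := hCgen
      have hIAt := hIA s hsmem t htR
      rw [Finset.mem_powersetCard, ← hCx]
      exact ⟨coal_subset_Icc hn t, coal_card hIAt hs hsn⟩
  have hdisj : ∀ t ∈ R s, ∀ t' ∈ R s, t ≠ t' → Disjoint (gen n t) (gen n t') := by
    intro t ht t' ht' hne
    rw [Finset.disjoint_left]
    intro C hCt hCt'
    rw [gen, Finset.mem_image] at hCt hCt'
    obtain ⟨x, hx, hCx⟩ := hCt
    obtain ⟨y, hy, hCy⟩ := hCt'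
    have hIAt := hIA s hsmem t ht
    have hIAt' := hIA s hsmem t' ht'
    have heq : coal n x t = coal n y t' := by rw [hCx, hCy]
    obtain ⟨k, hk, hrot⟩ := coal_eq_rotate hn hs hsn hIAt hIAt' hx hy heq
    exact hne (hdistinct s hsmem t ht t' ht' ⟨k, by rw [hIAt.1]; exact hk, hrot⟩)
  have h1 : (Finset.powersetCard s (Finset.Icc 1 n)).card = n.choose s := by
    rw [Finset.card_powersetCard, Nat.card_Icc]
    norm_num
  rw [hpart, Finset.card_biUnion hdisj] at h1
  rw [← h1]
  apply Finset.sum_congr rfl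
  intro t ht
  exact (gen_card hn hs hsn (hIA s hsmem t ht)).symm

private lemma list_sum_getD (f : List ℕ → ℕ) :
    ∀ (L : List (List ℕ)),
      (L.map f).sum = ∑ j ∈ Finset.range L.length, f (L.getD j []) := by
  intro L
  induction L with
  | nil => simp
  | cons a L ih =>
    rw [List.map_cons, List.sum_cons, List.length_cons, Finset.sum_range_succ']
    simp only [List.getD_cons_succ, List.getD_cons_zero]
    rw [← ih]
    omega

lemma global_identity {n : ℕ} (hn : 1 ≤ n) (R : ℕ → Finset (List ℕ))
    (hIA : ∀ s ∈ Finset.Icc 1 n, ∀ t ∈ R s, IsIA n s t)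
    (hdistinct : ∀ s ∈ Finset.Icc 1 n, ∀ t ∈ R s, ∀ u ∈ R s, ShiftEquiv t u → t = u)
    (hcomplete : ∀ s ∈ Finset.Icc 1 n, ∀ u, IsIA n s u → ∃ t ∈ R s, ShiftEquiv t u)
    (L : List (List ℕ)) (hnd : L.Nodup)
    (hLmem : L.toFinset =
      (Finset.Icc 1 n).biUnion (fun s => (R s).filter (fun t => period t < s))) :
    n * (∑ s ∈ Finset.Icc 1 n, ((R s).filter (fun t => period t = s)).card)
      + offsetG n L L.length = 2 ^ n - 1 := by
  have hchoose := sum_stride_eq_choose hn R hIA hdistinct hcomplete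
  -- total sum of strides equals 2^n - 1
  have htot : ∑ s ∈ Finset.Icc 1 n, ∑ t ∈ R s, strideG n t = 2 ^ n - 1 := by
    rw [Finset.sum_congr rfl hchoose]
    have hr : Finset.range (n+1) = insert 0 (Finset.Icc 1 n) := by
      ext i
      simp only [Finset.mem_range, Finset.mem_insert, Finset.mem_Icc]
      omega
    have h0 : (0 : ℕ) ∉ Finset.Icc 1 n := by simp
    have := Nat.sum_range_choose n
    rw [hr, Finset.sum_insert h0] at this
    have hc0 : n.choose 0 = 1 := Nat.choose_zero_right n
    have h2 : n.choose 0 + (Finset.Icc 1 n).sum n.choose = 2 ^ n := this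
    have h3 : (Finset.Icc 1 n).sum n.choose = ∑ s ∈ Finset.Icc 1 n, n.choose s := rfl
    omega
  -- split each inner sum
  have hsplit : ∀ s ∈ Finset.Icc 1 n,
      ∑ t ∈ R s, strideG n t
        = n * ((R s).filter (fun t => period t = s)).card
          + ∑ t ∈ (R s).filter (fun t => period t < s), strideG n t := by
    intro s hsmem
    obtain ⟨hs, hsn⟩ := Finset.mem_Icc.1 hsmem
    rw [← Finset.sum_filter_add_sum_filter_not (R s) (fun t => period t = s)]
    congr 1
    · rw [Finset.sum_congr rfl (g := fun _ => n), Finset.sum_const, smul_eq_mul,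
        Nat.mul_comm]
      intro t ht
      rw [Finset.mem_filter] at ht
      have hIAt := hIA s hsmem t ht.1
      rw [strideG, hIAt.1, ht.2, Nat.mul_div_cancel _ (show 0 < s by omega)]
    · apply Finset.sum_congr _ (fun _ _ => rfl)
      apply Finset.filter_congr
      intro t ht
      have hIAt := hIA s hsmem t ht
      have hne : t ≠ [] := ia_ne_nil hIAt hs
      have hle : period t ≤ s := hIAt.1 ▸ period_le_length t hne
      omega
  -- identify offsetG with the biUnion sum
  have hD : offsetG n L L.length
      = ∑ s ∈ Finset.Icc 1 n,
          ∑ t ∈ (R s).filter (fun t => period t < s), strideG n t := by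
    have h1 : offsetG n L L.length = (L.map (strideG n)).sum :=
      (list_sum_getD (strideG n) L).symm
    have h2 : (L.map (strideG n)).sum = ∑ t ∈ L.toFinset, strideG n t :=
      (List.sum_toFinset _ hnd).symm
    rw [h1, h2, hLmem]
    apply Finset.sum_biUnion
    intro s hs s' hs' hne
    simp only [Finset.coe_Icc, Set.mem_Icc] at hs hs'
    apply Finset.disjoint_left.2
    intro t ht ht'
    rw [Finset.mem_filter] at ht ht'
    have e1 := (hIA s (Finset.mem_Icc.2 hs) t ht.1).1
    have e2 := (hIA s' (Finset.mem_Icc.2 hs') t ht'.1).1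
    exact hne (by omega)
  rw [Finset.sum_congr rfl hsplit, Finset.sum_add_distrib, ← Finset.mul_sum] at htot
  omega

private lemma cnt_formula {n : ℕ} (hn : 1 ≤ n) (r : ℕ) (hr : r < n) :
    ∀ D, ((Finset.range D).filter (fun m => m % n = r)).card
      = D / n + (if r < D % n then 1 else 0) := by
  intro D
  induction D with
  | zero => simp
  | succ D ih =>
    rw [Finset.range_add_one, Finset.filter_insert]
    have hnotmem : D ∉ Finset.range D := by simp
    have hdm := Nat.div_add_mod D n
    have hm1 : D % n < n := Nat.mod_lt _ (by omega)
    have hins : (if D % n = r then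
          insert D ((Finset.range D).filter (fun m => m % n = r))
        else (Finset.range D).filter (fun m => m % n = r)).card
        = (if D % n = r then 1 else 0)
          + ((Finset.range D).filter (fun m => m % n = r)).card := by
      split_ifs with h
      · rw [Finset.card_insert_of_notMem
          (fun hmem => hnotmem (Finset.mem_filter.1 hmem).1)]
        omega
      · omega
    rw [hins, ih]
    rcases Nat.lt_or_ge (D % n + 1) n with hlt | hge
    · have hdiv : (D+1) / n = D / n ∧ (D+1) % n = D % n + 1 :=
        (Nat.div_mod_unique (show 0 < n by omega)).2 ⟨by omega, by omega⟩
      rw [hdiv.1, hdiv.2]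
      split_ifs <;> omega
    · have hmul : n * (D / n + 1) = n * (D / n) + n := by ring
      have hdiv : (D+1) / n = D / n + 1 ∧ (D+1) % n = 0 :=
        (Nat.div_mod_unique (show 0 < n by omega)).2 ⟨by omega, by omega⟩
      rw [hdiv.1, hdiv.2]
      split_ifs <;> omega

private lemma block_card {n : ℕ} (hn : 1 ≤ n) (r H d : ℕ) (hr : r < n) (hd : d ≤ n) :
    ((Finset.Ico H (H + d)).filter (fun m => m % n = r)).card
      = if ((r : ℤ) - (H : ℤ)) % (n : ℤ) < (d : ℤ) then 1 else 0 := by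
  have hn0 : (0:ℤ) < (n:ℤ) := by exact_mod_cast hn
  set e := (((r : ℤ) - H) % n).toNat with hedef
  have he0 : (0:ℤ) ≤ ((r : ℤ) - H) % n := Int.emod_nonneg _ (by omega)
  have heeq : ((r : ℤ) - H) % n = (e : ℤ) := (Int.toNat_of_nonneg he0).symm
  have helt : (e : ℤ) < n := by
    have := Int.emod_lt_of_pos ((r:ℤ) - H) hn0
    omega
  have hcond : (((r : ℤ) - H) % n < (d:ℤ)) ↔ e < d := by
    rw [heeq]
    exact_mod_cast Iff.rfl
  have hrmod : (r:ℤ) % n = (r:ℤ) := Int.emod_eq_of_lt (by omega) (by omega)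
  have hkey : ∀ m : ℕ, H ≤ m → m < H + d → m % n = r → m = H + e := by
    intro m h1 h2 h3
    have hc1 : ((m % n : ℕ) : ℤ) = (m:ℤ) % (n:ℤ) := by push_cast; ring
    rw [h3] at hc1
    have hmr : (m : ℤ) % n = (r : ℤ) % n := by rw [← hc1, hrmod]
    have hsub1 : ((m:ℤ) - H) % n = ((m:ℤ) % n - (H:ℤ) % n) % n := Int.sub_emod _ _ _
    have hsub2 : ((r:ℤ) - H) % n = ((r:ℤ) % n - (H:ℤ) % n) % n := Int.sub_emod _ _ _
    have hmH : ((m:ℤ) - H) % n = ((r:ℤ) - H) % n := by rw [hsub1, hsub2, hmr]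
    have hlt' : ((m:ℤ) - H) % n = (m:ℤ) - H :=
      Int.emod_eq_of_lt (by omega) (by omega)
    omega
  have hiff : ∀ m : ℕ, (m ∈ (Finset.Ico H (H + d)).filter (fun m => m % n = r))
      ↔ (e < d ∧ m = H + e) := by
    intro m
    rw [Finset.mem_filter, Finset.mem_Ico]
    constructor
    · rintro ⟨⟨h1, h2⟩, h3⟩
      have hm := hkey m h1 h2 h3
      constructor
      · omega
      · exact hm
    · rintro ⟨hed, rfl⟩
      refine ⟨⟨by omega, by omega⟩, ?_⟩
      have h1 : ((H + e : ℕ) : ℤ) = (H:ℤ) + (e:ℤ) := by push_cast; ring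
      have h2 : ((H:ℤ) + ((r:ℤ) - H) % n) % n = ((H:ℤ) + ((r:ℤ) - H)) % n := by
        rw [Int.add_emod, Int.emod_emod_of_dvd _ dvd_rfl, ← Int.add_emod]
      have h3 : (H:ℤ) + ((r:ℤ) - H) = (r:ℤ) := by ring
      have h4 : ((H + e : ℕ) : ℤ) % n = (r:ℤ) := by
        rw [h1, ← heeq, h2, h3, hrmod]
      have h5 : (((H + e) % n : ℕ) : ℤ) = ((H + e : ℕ) : ℤ) % n := by
        push_cast; ring
      omega
  rcases Nat.lt_or_ge e d with hed | hed
  · have hset : (Finset.Ico H (H + d)).filter (fun m => m % n = r) = {H + e} := by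
      ext m
      rw [hiff m, Finset.mem_singleton]
      constructor
      · rintro ⟨_, hm⟩; exact hm
      · intro hm; exact ⟨hed, hm⟩
    rw [hset, if_pos (hcond.2 hed)]
    simp
  · have hset : (Finset.Ico H (H + d)).filter (fun m => m % n = r) = ∅ := by
      ext m
      rw [hiff m]
      simp only [Finset.notMem_empty, iff_false]
      rintro ⟨h, _⟩
      omega
    rw [hset, if_neg (fun hc => absurd (hcond.1 hc) (by omega))]
    simp

lemma stride_le {n s : ℕ} {t : List ℕ} (hIA : IsIA n s t) (hs : 1 ≤ s) (hsn : s ≤ n) :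
    strideG n t ≤ n := by
  have hne := ia_ne_nil hIA hs
  have hπ : period t ≤ s := hIA.1 ▸ period_le_length t hne
  rw [strideG, hIA.1]
  calc n * period t / s ≤ n * s / s :=
        Nat.div_le_div_right (Nat.mul_le_mul_left n hπ)
  _ = n := Nat.mul_div_cancel n (show 0 < s by omega)

lemma desig_eq_cnt {n : ℕ} (hn : 1 ≤ n) (L : List (List ℕ))
    (hstride : ∀ j, j < L.length → strideG n (L.getD j []) ≤ n)
    {x : ℕ} (hx1 : 1 ≤ x) (hxn : x ≤ n) :
    desigCountG n L x
      = ((Finset.range (offsetG n L L.length)).filter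
          (fun m => m % n = x - 1)).card := by
  suffices h : ∀ k, k ≤ L.length →
      ((Finset.range k).filter (fun j =>
        ((x : ℤ) - 1 - (offsetG n L j : ℤ)) % (n : ℤ)
          < (strideG n (L.getD j []) : ℤ))).card
      = ((Finset.range (offsetG n L k)).filter (fun m => m % n = x - 1)).card by
    exact h L.length le_rfl
  intro k
  induction k with
  | zero =>
    intro _
    simp [offsetG]
  | succ k ih =>
    intro hk
    have hoff : offsetG n L (k+1) = offsetG n L k + strideG n (L.getD k []) := by
      rw [offsetG, offsetG, Finset.sum_range_succ]
    have hb := block_card hn (x-1) (offsetG n L k) (strideG n (L.getD k []))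
      (by omega) (hstride k (by omega))
    have hcast : (((x - 1 : ℕ)) : ℤ) = (x:ℤ) - 1 := by
      push_cast [hx1]
      ring
    rw [hcast] at hb
    have hsplitr : Finset.range (offsetG n L (k+1))
        = Finset.range (offsetG n L k)
          ∪ Finset.Ico (offsetG n L k) (offsetG n L k + strideG n (L.getD k [])) := by
      rw [Finset.range_eq_Ico, Finset.range_eq_Ico, hoff]
      rw [Finset.Ico_union_Ico_eq_Ico (by omega) (by omega)]
    have hdisj : Disjoint
        ((Finset.range (offsetG n L k)).filter (fun m => m % n = x - 1))
        ((Finset.Ico (offsetG n L k)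
          (offsetG n L k + strideG n (L.getD k []))).filter
            (fun m => m % n = x - 1)) := by
      apply Finset.disjoint_left.2
      intro m hm1 hm2
      rw [Finset.mem_filter, Finset.mem_range] at hm1
      rw [Finset.mem_filter, Finset.mem_Ico] at hm2
      omega
    have h2 : ((Finset.range (offsetG n L (k+1))).filter
        (fun m => m % n = x - 1)).card
        = ((Finset.range (offsetG n L k)).filter (fun m => m % n = x - 1)).card
          + (if ((x : ℤ) - 1 - (offsetG n L k : ℤ)) % (n : ℤ)
              < (strideG n (L.getD k []) : ℤ) then 1 else 0) := by
      rw [hsplitr, Finset.filter_union, Finset.card_union_of_disjoint hdisj, hb]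
    rw [h2, ← ih (by omega)]
    rw [Finset.range_add_one, Finset.filter_insert]
    split_ifs with hc
    · rw [Finset.card_insert_of_notMem
        (fun hmem => by
          have := (Finset.mem_filter.1 hmem).1
          simp at this)]
    · rfl

end Lemmas

/-- **aggregate load balance.**  For each size `s`, let `R s`
contain one representative of each `≈`-class of size-`s` increment arrays,
and let `L` enumerate (in a fixed order, without repetition) the periodic
ones across all sizes.  Under the rotated designation scheme with global
offset, each agent `x ∈ {1,…,n}` receives in total
`|CV_x| = A + #{j : (x-1-H_j) mod n < d^{(j)}}` coalitions, where
`A = Σ_{s=1}^{n} |A(n,s)|`, and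
`⌊(2^n - 1)/n⌋ ≤ |CV_x| ≤ ⌈(2^n - 1)/n⌉`; in particular the total
allocations of any two agents differ by at most 1. -/
theorem stmt16 (n : ℕ) (hn : 1 ≤ n)
    (R : ℕ → Finset (List ℕ))
    (hIA : ∀ s ∈ Finset.Icc 1 n, ∀ t ∈ R s, IsIA n s t)
    (hdistinct : ∀ s ∈ Finset.Icc 1 n, ∀ t ∈ R s, ∀ u ∈ R s,
      ShiftEquiv t u → t = u)
    (hcomplete : ∀ s ∈ Finset.Icc 1 n, ∀ u, IsIA n s u →
      ∃ t ∈ R s, ShiftEquiv t u)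
    (L : List (List ℕ)) (hnd : L.Nodup)
    (hLmem : L.toFinset =
      (Finset.Icc 1 n).biUnion (fun s => (R s).filter (fun t => period t < s))) :
    ∀ x ∈ Finset.Icc 1 n,
      (2 ^ n - 1) / n
          ≤ (∑ s ∈ Finset.Icc 1 n, ((R s).filter (fun t => period t = s)).card)
              + desigCountG n L x ∧
      (∑ s ∈ Finset.Icc 1 n, ((R s).filter (fun t => period t = s)).card)
              + desigCountG n L x
          ≤ ((2 ^ n - 1) + n - 1) / n ∧
      ∀ y ∈ Finset.Icc 1 n,
        (∑ s ∈ Finset.Icc 1 n, ((R s).filter (fun t => period t = s)).card)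
            + desigCountG n L x
          ≤ ((∑ s ∈ Finset.Icc 1 n,
                ((R s).filter (fun t => period t = s)).card)
              + desigCountG n L y) + 1 := by
  have hid := global_identity hn R hIA hdistinct hcomplete L hnd hLmem
  have hstride_le : ∀ j, j < L.length → strideG n (L.getD j []) ≤ n := by
    intro j hj
    have hmem : L.getD j [] ∈ L.toFinset := by
      rw [List.mem_toFinset, List.getD_eq_getElem L [] hj]
      exact L.getElem_mem hj
    rw [hLmem, Finset.mem_biUnion] at hmem
    obtain ⟨s, hsmem, ht⟩ := hmem
    rw [Finset.mem_filter] at ht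
    obtain ⟨hs1, hsn⟩ := Finset.mem_Icc.1 hsmem
    exact stride_le (hIA s hsmem _ ht.1) hs1 hsn
  intro x hx
  obtain ⟨hx1, hxn⟩ := Finset.mem_Icc.1 hx
  set A := ∑ s ∈ Finset.Icc 1 n, ((R s).filter (fun t => period t = s)).card with hA
  set D := offsetG n L L.length with hDdef
  have hcnt : ∀ y : ℕ, 1 ≤ y → y ≤ n →
      desigCountG n L y = D / n + (if y - 1 < D % n then 1 else 0) := by
    intro y h1 h2
    rw [desig_eq_cnt hn L hstride_le h1 h2, cnt_formula hn (y-1) (by omega) D]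
  have hdm := Nat.div_add_mod D n
  have hmlt : D % n < n := Nat.mod_lt _ (by omega)
  have hxcnt := hcnt x hx1 hxn
  have hlow : (2^n - 1) / n = A + D / n := by
    rw [← hid, Nat.mul_add_div (by omega)]
  have hhigh : (2^n - 1 + n - 1) / n = A + (D + n - 1) / n := by
    have h1 : 2^n - 1 + n - 1 = n * A + (D + n - 1) := by omega
    rw [h1, Nat.mul_add_div (by omega)]
  have hceil : (D + n - 1) / n = D / n + (if 1 ≤ D % n then 1 else 0) := by
    split_ifs with h
    · have hmul : n * (D/n + 1) = n * (D/n) + n := by ring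
      exact ((Nat.div_mod_unique (a := D + n - 1) (c := D % n - 1) (d := D/n + 1)
        (show 0 < n by omega)).2 ⟨by omega, by omega⟩).1
    · exact ((Nat.div_mod_unique (a := D + n - 1) (c := n - 1) (d := D/n)
        (show 0 < n by omega)).2 ⟨by omega, by omega⟩).1
  refine ⟨?_, ?_, ?_⟩
  · rw [hlow, hxcnt]
    split_ifs <;> omega
  · rw [hhigh, hxcnt, hceil]
    split_ifs <;> omega
  · intro y hy
    obtain ⟨hy1, hyn⟩ := Finset.mem_Icc.1 hy
    rw [hxcnt, hcnt y hy1 hyn]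
    split_ifs <;> omega


end NDCA
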